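/- Let E be a real normed vector space, let s ⊆ E × ℝ × ℝ be an open convex set, and let q : E × ℝ × ℝ → E be twice continuously differentiable on s with ‖Dq(z)‖ ≤ M₁ and ‖D²q(z)‖ ≤ M₂ for every z ∈ s. Assume q(0, δ, δ) = 0 for every δ with (0,δ,δ) ∈ s, and q(p', 0, 0) = p' for every p' with (p',0,0) ∈ s. Then for any p ∈ E and δ₁, δ₂ ∈ ℝ such that the points (p,δ₁,δ₂), (0,δ₁,δ₂), (p,0,δ₂), (0,0,δ₂), (0,δ₂,δ₂), (p,0,0), (0,0,0) all lie in s, one has ‖q(p, δ₁, δ₂) − p‖ ≤ M₁·|δ₁ − δ₂| + M₂·‖p‖·(|δ₁| + |δ₂|). -/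

import Mathlib

set_option maxHeartbeats 1000000 in
/-- Abstract form of the wave-strength estimate across a reaction step: if the `C²`
map `q` satisfies `q(0,δ,δ) = 0` and `q(p',0,0) = p'`, with first and second
derivatives bounded by `M₁` and `M₂` on an open convex set `s`, then
`‖q(p,δ₁,δ₂) − p‖ ≤ M₁ |δ₁ − δ₂| + M₂ ‖p‖ (|δ₁| + |δ₂|)`. -/
theorem wave_strength_reaction_step_estimate
    {E : Type*} [NormedAddCommGroup E] [NormedSpace ℝ E]
    (s : Set (E × ℝ × ℝ)) (hs : IsOpen s) (hconv : Convex ℝ s)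
    (q : E × ℝ × ℝ → E) (M₁ M₂ : ℝ)
    (hq : ContDiffOn ℝ 2 q s)
    (hM₁ : ∀ z ∈ s, ‖iteratedFDerivWithin ℝ 1 q s z‖ ≤ M₁)
    (hM₂ : ∀ z ∈ s, ‖iteratedFDerivWithin ℝ 2 q s z‖ ≤ M₂)
    (hq0 : ∀ δ : ℝ, ((0 : E), δ, δ) ∈ s → q (0, δ, δ) = 0)
    (hqid : ∀ p' : E, (p', (0 : ℝ), (0 : ℝ)) ∈ s → q (p', 0, 0) = p')
    (p : E) (δ₁ δ₂ : ℝ)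
    (h₁ : (p, δ₁, δ₂) ∈ s) (h₂ : ((0 : E), δ₁, δ₂) ∈ s) (h₃ : (p, 0, δ₂) ∈ s)
    (h₄ : ((0 : E), 0, δ₂) ∈ s) (h₅ : ((0 : E), δ₂, δ₂) ∈ s)
    (h₆ : (p, (0 : ℝ), (0 : ℝ)) ∈ s) (h₇ : ((0 : E), (0 : ℝ), (0 : ℝ)) ∈ s) :
    ‖q (p, δ₁, δ₂) - p‖ ≤ M₁ * |δ₁ - δ₂| + M₂ * ‖p‖ * (|δ₁| + |δ₂|) := by
  have hsU : UniqueDiffOn ℝ s := hs.uniqueDiffOn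
  set D : E × ℝ × ℝ → (E × ℝ × ℝ) →L[ℝ] E := fderivWithin ℝ q s with hD
  have hM₁' : ∀ z ∈ s, ‖D z‖ ≤ M₁ := by
    intro z hz
    have h0 := norm_iteratedFDerivWithin_fderivWithin (f := q) (n := 0) hsU hz
    rw [norm_iteratedFDerivWithin_zero] at h0
    calc ‖D z‖ = ‖iteratedFDerivWithin ℝ 1 q s z‖ := h0
      _ ≤ M₁ := hM₁ z hz
  have hDdiff : DifferentiableOn ℝ D s := by
    have : ContDiffOn ℝ 1 D s := hq.fderivWithin hsU (by norm_num)
    exact this.differentiableOn one_ne_zero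
  have hM₂' : ∀ z ∈ s, ‖fderivWithin ℝ D s z‖ ≤ M₂ := by
    intro z hz
    have h1 := norm_iteratedFDerivWithin_fderivWithin (f := D) (n := 0) hsU hz
    rw [norm_iteratedFDerivWithin_zero] at h1
    have h2 := norm_iteratedFDerivWithin_fderivWithin (f := q) (n := 1) hsU hz
    calc ‖fderivWithin ℝ D s z‖ = ‖iteratedFDerivWithin ℝ 1 D s z‖ := h1
      _ = ‖iteratedFDerivWithin ℝ 2 q s z‖ := h2
      _ ≤ M₂ := hM₂ z hz
  have hM₂nn : 0 ≤ M₂ := le_trans (norm_nonneg _) (hM₂ _ h₇)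
  -- first piece: ‖q(0,δ₁,δ₂) - q(0,δ₂,δ₂)‖ ≤ M₁ |δ₁ - δ₂|
  have hB : ‖q ((0 : E), δ₁, δ₂) - q ((0 : E), δ₂, δ₂)‖ ≤ M₁ * |δ₁ - δ₂| := by
    have h0 := hconv.norm_image_sub_le_of_norm_fderivWithin_le (hq.differentiableOn (by norm_num)) hM₁' h₅ h₂
    have hnorm : ‖((0 : E), δ₁, δ₂) - ((0 : E), δ₂, δ₂)‖ = |δ₁ - δ₂| := by
      simp [Prod.norm_def, Real.norm_eq_abs]
    rwa [hnorm] at h0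
  -- the convex open set t
  set t : Set E := {x : E | (x, δ₁, δ₂) ∈ s ∧ (x, (0:ℝ), (0:ℝ)) ∈ s} with ht
  have htopen : IsOpen t := by
    have c1 : Continuous fun x : E => ((x, δ₁, δ₂) : E × ℝ × ℝ) := continuous_id.prodMk continuous_const
    have c2 : Continuous fun x : E => ((x, (0:ℝ), (0:ℝ)) : E × ℝ × ℝ) := continuous_id.prodMk continuous_const
    exact (hs.preimage c1).inter (hs.preimage c2)
  have htconv : Convex ℝ t := by
    intro x hx y hy a b ha hb hab
    have e1 : a • ((x, δ₁, δ₂) : E × ℝ × ℝ) + b • ((y, δ₁, δ₂) : E × ℝ × ℝ)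
        = (a • x + b • y, δ₁, δ₂) := by
      simp [Prod.ext_iff, smul_eq_mul, ← add_mul, hab]
    have e2 : a • ((x, (0:ℝ), (0:ℝ)) : E × ℝ × ℝ) + b • ((y, (0:ℝ), (0:ℝ)) : E × ℝ × ℝ)
        = (a • x + b • y, (0:ℝ), (0:ℝ)) := by
      simp [Prod.ext_iff, smul_eq_mul]
    exact ⟨e1 ▸ hconv hx.1 hy.1 ha hb hab, e2 ▸ hconv hx.2 hy.2 ha hb hab⟩
  have h0t : (0 : E) ∈ t := ⟨h₂, h₇⟩
  have hpt : p ∈ t := ⟨h₁, h₆⟩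
  -- g and its derivative
  set A : E →L[ℝ] E × ℝ × ℝ := (ContinuousLinearMap.id ℝ E).prod 0 with hA
  have hAx : ∀ x : E, A x = (x, (0:ℝ), (0:ℝ)) := fun x => rfl
  have hAnorm : ‖A‖ ≤ 1 := by
    refine ContinuousLinearMap.opNorm_le_bound _ zero_le_one (fun x => ?_)
    rw [hAx, one_mul]
    simp [Prod.norm_def, norm_nonneg]
  set g : E → E := fun x => q (x, δ₁, δ₂) - q (x, (0:ℝ), (0:ℝ)) with hg
  have hderiv : ∀ x ∈ t, HasFDerivAt g ((D (x, δ₁, δ₂) - D (x, (0:ℝ), (0:ℝ))).comp A) x := by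
    intro x hx
    have hq1 : HasFDerivAt q (D (x, δ₁, δ₂)) (x, δ₁, δ₂) := by
      have := (hq.differentiableOn (by norm_num) (x, δ₁, δ₂) hx.1).differentiableAt
        (hs.mem_nhds hx.1)
      rw [hD, fderivWithin_of_isOpen hs hx.1]
      exact this.hasFDerivAt
    have hq2 : HasFDerivAt q (D (x, (0:ℝ), (0:ℝ))) (x, (0:ℝ), (0:ℝ)) := by
      have := (hq.differentiableOn (by norm_num) _ hx.2).differentiableAt (hs.mem_nhds hx.2)
      rw [hD, fderivWithin_of_isOpen hs hx.2]
      exact this.hasFDerivAt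
    have hc1 : HasFDerivAt (fun x : E => ((x, δ₁, δ₂) : E × ℝ × ℝ)) A x := by
      have := HasFDerivAt.prodMk (hasFDerivAt_id x) (hasFDerivAt_const (𝕜 := ℝ) ((δ₁, δ₂) : ℝ × ℝ) x)
      simpa [hA] using this
    have hc2 : HasFDerivAt (fun x : E => ((x, (0:ℝ), (0:ℝ)) : E × ℝ × ℝ)) A x := by
      have := HasFDerivAt.prodMk (hasFDerivAt_id x) (hasFDerivAt_const (𝕜 := ℝ) (((0:ℝ), (0:ℝ)) : ℝ × ℝ) x)
      simpa [hA] using this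
    have := ((hq1.comp x hc1).sub (hq2.comp x hc2))
    rw [ContinuousLinearMap.sub_comp]
    exact this
  have hgdiff : DifferentiableOn ℝ g t :=
    fun x hx => ((hderiv x hx).differentiableAt).differentiableWithinAt
  have hgbound : ∀ x ∈ t, ‖fderivWithin ℝ g t x‖ ≤ M₂ * max |δ₁| |δ₂| := by
    intro x hx
    have heq : fderivWithin ℝ g t x = (D (x, δ₁, δ₂) - D (x, (0:ℝ), (0:ℝ))).comp A := by
      rw [fderivWithin_of_isOpen htopen hx]
      exact (hderiv x hx).fderiv
    rw [heq]
    have hDdb : ‖D (x, δ₁, δ₂) - D (x, (0:ℝ), (0:ℝ))‖ ≤ M₂ * max |δ₁| |δ₂| := by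
      have h0 := hconv.norm_image_sub_le_of_norm_fderivWithin_le hDdiff hM₂' hx.2 hx.1
      have hnorm : ‖((x, δ₁, δ₂) : E × ℝ × ℝ) - (x, (0:ℝ), (0:ℝ))‖ = max |δ₁| |δ₂| := by
        simp [Prod.norm_def, Real.norm_eq_abs, le_max_iff, abs_nonneg]
      rwa [hnorm] at h0
    calc ‖(D (x, δ₁, δ₂) - D (x, (0:ℝ), (0:ℝ))).comp A‖
        ≤ ‖D (x, δ₁, δ₂) - D (x, (0:ℝ), (0:ℝ))‖ * ‖A‖ := ContinuousLinearMap.opNorm_comp_le _ _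
      _ ≤ (M₂ * max |δ₁| |δ₂|) * 1 := by
          apply mul_le_mul hDdb hAnorm (norm_nonneg _)
          positivity
      _ = M₂ * max |δ₁| |δ₂| := mul_one _
  have hA2 : ‖g p - g 0‖ ≤ (M₂ * max |δ₁| |δ₂|) * ‖p‖ := by
    have := htconv.norm_image_sub_le_of_norm_fderivWithin_le hgdiff hgbound h0t hpt
    simpa using this
  -- assemble
  have hq00 : q ((0:E), (0:ℝ), (0:ℝ)) = 0 := hq0 0 h₇
  have hqp0 : q (p, (0:ℝ), (0:ℝ)) = p := hqid p h₆
  have hq022 : q ((0:E), δ₂, δ₂) = 0 := hq0 δ₂ h₅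
  have hsplit : q (p, δ₁, δ₂) - p
      = (g p - g 0) + (q ((0:E), δ₁, δ₂) - q ((0:E), δ₂, δ₂)) := by
    simp only [hg, hq00, hqp0, hq022]
    abel
  rw [hsplit]
  calc ‖(g p - g 0) + (q ((0:E), δ₁, δ₂) - q ((0:E), δ₂, δ₂))‖
      ≤ ‖g p - g 0‖ + ‖q ((0:E), δ₁, δ₂) - q ((0:E), δ₂, δ₂)‖ := norm_add_le _ _
    _ ≤ (M₂ * max |δ₁| |δ₂|) * ‖p‖ + M₁ * |δ₁ - δ₂| := add_le_add hA2 hB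
    _ ≤ M₂ * ‖p‖ * (|δ₁| + |δ₂|) + M₁ * |δ₁ - δ₂| := by
        have hmax : max |δ₁| |δ₂| ≤ |δ₁| + |δ₂| :=
          max_le (le_add_of_nonneg_right (abs_nonneg _)) (le_add_of_nonneg_left (abs_nonneg _))
        have := mul_le_mul_of_nonneg_left hmax hM₂nn
        nlinarith [norm_nonneg p, mul_le_mul_of_nonneg_right this (norm_nonneg p)]
    _ = M₁ * |δ₁ - δ₂| + M₂ * ‖p‖ * (|δ₁| + |δ₂|) := by ring
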